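/- arXiv:1908.02922 — 2 statements merged into one kernel-verified Lean document; each statement's English description precedes it below -/
import Mathlib

section
/- Let (x_i, y_i), i = 1,…,n, with x_1 ≤ … ≤ x_n, and let m satisfy n − 2m ≥ 1. If Σ_{i=m+1}^{n−m} x_i ≠ 0, then the trimmed mean equation ε̄_{nλ}(θ) = 0 has at least one real root θ, where ε̄_{nλ}(θ) is the average of the middle n − 2m order statistics of the residuals ε_i(θ) = y_i − θ·x_i. -/
section OrderStatLemmas

lemma sorted_count_le' (l : List ℝ) (hl : l.Pairwise (· ≤ ·)) (k : ℕ) (hk : k < l.length) :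
    k + 1 ≤ l.countP (fun a => decide (a ≤ l.getD k 0)) := by
  have hsub : (l.take (k+1)).countP (fun a => decide (a ≤ l.getD k 0)) ≤
      l.countP (fun a => decide (a ≤ l.getD k 0)) := (List.take_sublist _ _).countP_le
  have hlen : (l.take (k+1)).length = k + 1 := by
    rw [List.length_take]; omega
  have hall : (l.take (k+1)).countP (fun a => decide (a ≤ l.getD k 0)) =
      (l.take (k+1)).length := by
    rw [List.countP_eq_length]
    intro a ha
    rw [List.mem_iff_getElem] at ha
    obtain ⟨i, hi, rfl⟩ := ha
    rw [hlen] at hi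
    rw [List.getElem_take, List.getD_eq_getElem _ _ hk]
    simp only [decide_eq_true_eq]
    rcases Nat.lt_or_ge i k with h | h
    · have := hl.rel_get_of_lt (a := ⟨i, by omega⟩) (b := ⟨k, hk⟩) (by exact h)
      simpa [List.get_eq_getElem] using this
    · have : i = k := by omega
      subst this; rfl
  omega

lemma sorted_count_lt' (l : List ℝ) (hl : l.Pairwise (· ≤ ·)) (k : ℕ) (hk : k < l.length) :
    l.countP (fun a => decide (a < l.getD k 0)) ≤ k := by
  have hsplit := List.countP_append (l₁ := l.take k) (l₂ := l.drop k)
    (p := fun a => decide (a < l.getD k 0))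
  rw [List.take_append_drop] at hsplit
  have h2 : (l.drop k).countP (fun a => decide (a < l.getD k 0)) = 0 := by
    rw [List.countP_eq_zero]
    intro a ha
    rw [List.mem_iff_getElem] at ha
    obtain ⟨i, hi, rfl⟩ := ha
    rw [List.length_drop] at hi
    rw [List.getElem_drop, List.getD_eq_getElem _ _ hk]
    simp only [decide_eq_true_eq, not_lt]
    rcases Nat.eq_zero_or_pos i with h | h
    · subst h; simp
    · have := hl.rel_get_of_lt (a := ⟨k, hk⟩) (b := ⟨k + i, by omega⟩) (by simp; omega)
      simpa [List.get_eq_getElem] using this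
  have h1 : (l.take k).countP (fun a => decide (a < l.getD k 0)) ≤ k :=
    le_trans List.countP_le_length (by rw [List.length_take]; omega)
  omega

lemma card_filter_coe' (l : List ℝ) (p : ℝ → Prop) [DecidablePred p] :
    Multiset.card (Multiset.filter p ↑l) = l.countP (fun a => decide (p a)) := by
  simp [Multiset.filter_coe, List.countP_eq_length_filter]

lemma count_le_stat (s : Multiset ℝ) (k : ℕ) (hk : k < Multiset.card s) :
    k + 1 ≤ Multiset.card (s.filter (· ≤ (Multiset.sort s (· ≤ ·)).getD k 0)) := by
  set l := Multiset.sort s (· ≤ ·) with hl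
  have hs : (l : Multiset ℝ) = s := Multiset.sort_eq _ _
  rw [← hs, card_filter_coe']
  exact sorted_count_le' l (Multiset.pairwise_sort _ _) k (by rw [Multiset.length_sort]; exact hk)

lemma count_lt_stat (s : Multiset ℝ) (k : ℕ) (hk : k < Multiset.card s) :
    Multiset.card (s.filter (· < (Multiset.sort s (· ≤ ·)).getD k 0)) ≤ k := by
  set l := Multiset.sort s (· ≤ ·) with hl
  have hs : (l : Multiset ℝ) = s := Multiset.sort_eq _ _
  rw [← hs, card_filter_coe']
  exact sorted_count_lt' l (Multiset.pairwise_sort _ _) k (by rw [Multiset.length_sort]; exact hk)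

lemma stat_le_of_count (s : Multiset ℝ) (k : ℕ) (hk : k < Multiset.card s) (B : ℝ)
    (h : k + 1 ≤ Multiset.card (s.filter (· ≤ B))) :
    (Multiset.sort s (· ≤ ·)).getD k 0 ≤ B := by
  by_contra hB
  push_neg at hB
  have hmono : Multiset.card (s.filter (· ≤ B)) ≤
      Multiset.card (s.filter (· < (Multiset.sort s (· ≤ ·)).getD k 0)) :=
    Multiset.card_le_card (Multiset.monotone_filter_right _ (fun a ha => lt_of_le_of_lt ha hB))
  have := count_lt_stat s k hk
  omega

lemma le_stat_of_count (s : Multiset ℝ) (k : ℕ) (hk : k < Multiset.card s) (B : ℝ)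
    (h : Multiset.card (s.filter (· < B)) ≤ k) :
    B ≤ (Multiset.sort s (· ≤ ·)).getD k 0 := by
  by_contra hB
  push_neg at hB
  have hmono : Multiset.card (s.filter (· ≤ (Multiset.sort s (· ≤ ·)).getD k 0)) ≤
      Multiset.card (s.filter (· < B)) :=
    Multiset.card_le_card (Multiset.monotone_filter_right _ (fun a ha => lt_of_le_of_lt ha hB))
  have := count_le_stat s k hk
  omega

lemma card_filter_map' {n : ℕ} (f : Fin n → ℝ) (p : ℝ → Prop) [DecidablePred p] :
    Multiset.card ((Multiset.map f Finset.univ.val).filter p) =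
      (Finset.univ.filter (fun i => p (f i))).card := by
  rw [← Multiset.countP_eq_card_filter, Multiset.countP_map]
  rfl

lemma card_val_ge (n a : ℕ) :
    (Finset.univ.filter (fun i : Fin n => a ≤ (i : ℕ))).card = n - a := by
  have h : (Finset.univ.filter (fun i : Fin n => a ≤ (i : ℕ))).card = (Finset.Ico a n).card := by
    refine Finset.card_nbij (fun i => (i : ℕ)) ?_ ?_ ?_
    · intro i hi; simp at hi ⊢; exact hi
    · intro i _ j _ h; exact Fin.val_injective h
    · intro j hj; simp at hj ⊢; exact ⟨⟨j, hj.2⟩, hj.1, rfl⟩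
  rw [h, Nat.card_Ico]

lemma card_val_lt (n a : ℕ) :
    (Finset.univ.filter (fun i : Fin n => (i : ℕ) < a)).card = min a n := by
  have h : (Finset.univ.filter (fun i : Fin n => (i : ℕ) < a)).card
      = (Finset.range (min a n)).card := by
    refine Finset.card_nbij (fun i => (i : ℕ)) ?_ ?_ ?_
    · intro i hi; simp at hi ⊢; exact hi
    · intro i _ j _ h; exact Fin.val_injective h
    · intro j hj
      simp only [Finset.coe_range, Set.mem_Iio, lt_min_iff] at hj
      exact ⟨⟨j, hj.2⟩, by simp [hj.1], rfl⟩
  rw [h, Finset.card_range]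

end OrderStatLemmas

/-- The sorted list (in nondecreasing order) of residuals `y i - θ * x i`. -/
noncomputable def sortedResiduals (n : ℕ) (x y : Fin n → ℝ) (θ : ℝ) : List ℝ :=
  Multiset.sort (Multiset.map (fun i => y i - θ * x i) Finset.univ.val) (· ≤ ·)

/-- The k-th smallest residual (0-indexed: `k = 0` is the smallest). -/
noncomputable def orderStat (n : ℕ) (x y : Fin n → ℝ) (k : ℕ) (θ : ℝ) : ℝ :=
  (sortedResiduals n x y θ).getD k 0

section OrderStatAPI

variable {n : ℕ} (x y : Fin n → ℝ)

lemma card_residuals (θ : ℝ) :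
    Multiset.card (Multiset.map (fun i => y i - θ * x i) Finset.univ.val) = n := by
  rw [Multiset.card_map]
  simpa using Finset.card_univ (α := Fin n)

lemma orderStat_le_of_card {k : ℕ} (hk : k < n) {θ B : ℝ}
    (h : k + 1 ≤ (Finset.univ.filter (fun i => y i - θ * x i ≤ B)).card) :
    orderStat n x y k θ ≤ B := by
  apply stat_le_of_count
  · rw [card_residuals]; exact hk
  · rw [card_filter_map']; exact h

lemma le_orderStat_of_card {k : ℕ} (hk : k < n) {θ B : ℝ}
    (h : (Finset.univ.filter (fun i => y i - θ * x i < B)).card ≤ k) :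
    B ≤ orderStat n x y k θ := by
  apply le_stat_of_count
  · rw [card_residuals]; exact hk
  · rw [card_filter_map']; exact h

lemma card_le_orderStat {k : ℕ} (hk : k < n) (θ : ℝ) :
    k + 1 ≤ (Finset.univ.filter
      (fun i => y i - θ * x i ≤ orderStat n x y k θ)).card := by
  have h := count_le_stat (Multiset.map (fun i => y i - θ * x i) Finset.univ.val) k
    (by rw [card_residuals]; exact hk)
  rw [card_filter_map'] at h
  exact h

end OrderStatAPI

section Bounds

variable {n : ℕ} {x y : Fin n → ℝ}

lemma orderStat_lipschitz (x y : Fin n → ℝ) {k : ℕ} (hk : k < n) {M : ℝ}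
    (hM : ∀ i, |x i| ≤ M) (θ₁ θ₂ : ℝ) :
    orderStat n x y k θ₁ ≤ orderStat n x y k θ₂ + M * |θ₁ - θ₂| := by
  apply orderStat_le_of_card x y hk
  have hsub : Finset.univ.filter (fun i => y i - θ₂ * x i ≤ orderStat n x y k θ₂) ⊆
      Finset.univ.filter
        (fun i => y i - θ₁ * x i ≤ orderStat n x y k θ₂ + M * |θ₁ - θ₂|) := by
    intro i hi
    simp only [Finset.mem_filter, Finset.mem_univ, true_and] at hi ⊢
    have h1 : (θ₂ - θ₁) * x i ≤ M * |θ₁ - θ₂| := by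
      calc (θ₂ - θ₁) * x i ≤ |(θ₂ - θ₁) * x i| := le_abs_self _
        _ = |θ₂ - θ₁| * |x i| := abs_mul _ _
        _ ≤ |θ₂ - θ₁| * M := mul_le_mul_of_nonneg_left (hM i) (abs_nonneg _)
        _ = M * |θ₁ - θ₂| := by rw [abs_sub_comm]; ring
    have h2 : y i - θ₁ * x i = (y i - θ₂ * x i) + (θ₂ - θ₁) * x i := by ring
    rw [h2]; linarith
  exact le_trans (card_le_orderStat x y hk θ₂) (Finset.card_le_card hsub)

lemma bound_up_pos (hx : Monotone x) {k : ℕ} (hk : k < n) {θ : ℝ} (hθ : 0 ≤ θ)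
    {yMax : ℝ} (hy : ∀ i, y i ≤ yMax) (j : Fin n) (hj : (j : ℕ) = n - 1 - k) :
    orderStat n x y k θ ≤ yMax - θ * x j := by
  apply orderStat_le_of_card x y hk
  have hsub : Finset.univ.filter (fun i : Fin n => n - 1 - k ≤ (i : ℕ)) ⊆
      Finset.univ.filter (fun i => y i - θ * x i ≤ yMax - θ * x j) := by
    intro i hi
    simp only [Finset.mem_filter, Finset.mem_univ, true_and] at hi ⊢
    have hji : j ≤ i := by rw [← Fin.val_fin_le, hj]; exact hi
    have := mul_le_mul_of_nonneg_left (hx hji) hθ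
    have := hy i
    linarith
  refine le_trans ?_ (Finset.card_le_card hsub)
  rw [card_val_ge]; omega

lemma bound_low_pos (hx : Monotone x) {k : ℕ} (hk : k < n) {θ : ℝ} (hθ : 0 ≤ θ)
    {yMin : ℝ} (hy : ∀ i, yMin ≤ y i) (j : Fin n) (hj : (j : ℕ) = n - 1 - k) :
    yMin - θ * x j ≤ orderStat n x y k θ := by
  apply le_orderStat_of_card x y hk
  have hsub : Finset.univ.filter (fun i => y i - θ * x i < yMin - θ * x j) ⊆
      Finset.univ.filter (fun i : Fin n => n - k ≤ (i : ℕ)) := by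
    intro i hi
    simp only [Finset.mem_filter, Finset.mem_univ, true_and] at hi ⊢
    by_contra hcon
    push_neg at hcon
    have hij : i ≤ j := by rw [← Fin.val_fin_le, hj]; omega
    have := mul_le_mul_of_nonneg_left (hx hij) hθ
    have := hy i
    linarith
  refine le_trans (Finset.card_le_card hsub) ?_
  rw [card_val_ge]; omega

lemma bound_up_neg (hx : Monotone x) {k : ℕ} (hk : k < n) {θ : ℝ} (hθ : θ ≤ 0)
    {yMax : ℝ} (hy : ∀ i, y i ≤ yMax) (j : Fin n) (hj : (j : ℕ) = k) :
    orderStat n x y k θ ≤ yMax - θ * x j := by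
  apply orderStat_le_of_card x y hk
  have hsub : Finset.univ.filter (fun i : Fin n => (i : ℕ) < k + 1) ⊆
      Finset.univ.filter (fun i => y i - θ * x i ≤ yMax - θ * x j) := by
    intro i hi
    simp only [Finset.mem_filter, Finset.mem_univ, true_and] at hi ⊢
    have hij : i ≤ j := by rw [← Fin.val_fin_le, hj]; omega
    have := mul_le_mul_of_nonpos_left (hx hij) hθ
    have := hy i
    linarith
  refine le_trans ?_ (Finset.card_le_card hsub)
  rw [card_val_lt]; omega

lemma bound_low_neg (hx : Monotone x) {k : ℕ} (hk : k < n) {θ : ℝ} (hθ : θ ≤ 0)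
    {yMin : ℝ} (hy : ∀ i, yMin ≤ y i) (j : Fin n) (hj : (j : ℕ) = k) :
    yMin - θ * x j ≤ orderStat n x y k θ := by
  apply le_orderStat_of_card x y hk
  have hsub : Finset.univ.filter (fun i => y i - θ * x i < yMin - θ * x j) ⊆
      Finset.univ.filter (fun i : Fin n => (i : ℕ) < k) := by
    intro i hi
    simp only [Finset.mem_filter, Finset.mem_univ, true_and] at hi ⊢
    by_contra hcon
    push_neg at hcon
    have hij : j ≤ i := by rw [← Fin.val_fin_le, hj]; omega
    have := mul_le_mul_of_nonpos_left (hx hij) hθ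
    have := hy i
    linarith
  refine le_trans (Finset.card_le_card hsub) ?_
  rw [card_val_lt]; omega

end Bounds

theorem stmt_7 (n m : ℕ) (x y : Fin n → ℝ) (hx : Monotone x) (hm : 1 ≤ n - 2 * m)
    (hmn : 2 * m ≤ n)
    (hsum : ∑ i ∈ Finset.univ.filter (fun i : Fin n => m ≤ (i : ℕ) ∧ (i : ℕ) < n - m), x i ≠ 0) :
    ∃ θ : ℝ, (1 / ((n : ℝ) - 2 * m)) * ∑ k ∈ Finset.Ico m (n - m), orderStat n x y k θ = 0 := by
  have hn : 0 < n := by omega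
  have i0 : Fin n := ⟨0, hn⟩
  have hne : Finset.univ.Nonempty (α := Fin n) := ⟨i0, Finset.mem_univ _⟩
  set X : ℕ → ℝ := fun k => if h : k < n then x ⟨k, h⟩ else 0 with hX
  set S : ℝ := ∑ k ∈ Finset.Ico m (n - m), X k with hSdef
  set C : ℕ := (Finset.Ico m (n - m)).card with hC
  set yMax : ℝ := Finset.univ.sup' hne y with hyMaxdef
  set yMin : ℝ := Finset.univ.inf' hne y with hyMindef
  have hyMax : ∀ i, y i ≤ yMax := fun i => Finset.le_sup' y (Finset.mem_univ i)
  have hyMin : ∀ i, yMin ≤ y i := fun i => Finset.inf'_le y (Finset.mem_univ i)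
  set M : ℝ := Finset.univ.sup' hne (fun i => |x i|) with hMdef
  have hM : ∀ i, |x i| ≤ M := fun i => Finset.le_sup' (fun j : Fin n => |x j|) (Finset.mem_univ i)
  have hM0 : 0 ≤ M := le_trans (abs_nonneg _) (hM i0)
  -- S equals the hypothesis sum
  have hS : S = ∑ i ∈ Finset.univ.filter
      (fun i : Fin n => m ≤ (i : ℕ) ∧ (i : ℕ) < n - m), x i := by
    rw [hSdef]
    refine (Finset.sum_bij (fun (i : Fin n) _ => (i : ℕ)) ?_ ?_ ?_ ?_).symm
    · intro i hi
      simp only [Finset.mem_filter, Finset.mem_univ, true_and] at hi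
      simp only [Finset.mem_Ico]; exact hi
    · intro i _ j _ h; exact Fin.val_injective h
    · intro k hk
      simp only [Finset.mem_Ico] at hk
      exact ⟨⟨k, by omega⟩, by simp [Finset.mem_filter]; omega, rfl⟩
    · intro i hi
      simp only [hX]
      rw [dif_pos i.2]
  have hS0 : S ≠ 0 := by rw [hS]; exact hsum
  -- reversal reindexing
  have hrev : ∑ k ∈ Finset.Ico m (n - m), X (n - 1 - k) = S := by
    rw [hSdef]
    refine Finset.sum_nbij' (fun k => n - 1 - k) (fun k => n - 1 - k) ?_ ?_ ?_ ?_ ?_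
    · intro k hk; simp only [Finset.mem_Ico] at hk ⊢; omega
    · intro k hk; simp only [Finset.mem_Ico] at hk ⊢; omega
    · intro k hk; simp only [Finset.mem_Ico] at hk; show n - 1 - (n - 1 - k) = k; omega
    · intro k hk; simp only [Finset.mem_Ico] at hk; show n - 1 - (n - 1 - k) = k; omega
    · intro k _; rfl
  set f : ℝ → ℝ := fun θ => ∑ k ∈ Finset.Ico m (n - m), orderStat n x y k θ with hf
  -- continuity
  have hcont : Continuous f := by
    apply continuous_finset_sum
    intro k hk
    have hkn : k < n := by simp only [Finset.mem_Ico] at hk; omega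
    have hlip : LipschitzWith M.toNNReal (fun θ => orderStat n x y k θ) := by
      apply LipschitzWith.of_dist_le_mul
      intro θ₁ θ₂
      rw [Real.dist_eq, Real.dist_eq, Real.coe_toNNReal M hM0]
      have h1 := orderStat_lipschitz x y hkn hM θ₁ θ₂
      have h2 := orderStat_lipschitz x y hkn hM θ₂ θ₁
      rw [abs_sub_comm θ₂ θ₁] at h2
      rw [abs_le]
      constructor <;> linarith
    exact hlip.continuous
  -- the four bounds
  have hXval : ∀ k < n, ∀ (h : k < n), X k = x ⟨k, h⟩ := by
    intro k hk h; simp only [hX]; rw [dif_pos]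
  have hub_pos : ∀ θ : ℝ, 0 ≤ θ → f θ ≤ (C : ℝ) * yMax - θ * S := by
    intro θ hθ
    have hstep : f θ ≤ ∑ k ∈ Finset.Ico m (n - m), (yMax - θ * X (n - 1 - k)) := by
      apply Finset.sum_le_sum
      intro k hk
      simp only [Finset.mem_Ico] at hk
      have hkn : k < n := by omega
      have hjn : n - 1 - k < n := by omega
      rw [hXval _ hjn hjn]
      exact bound_up_pos hx hkn hθ hyMax ⟨n - 1 - k, hjn⟩ rfl
    calc f θ ≤ _ := hstep
      _ = (C : ℝ) * yMax - θ * ∑ k ∈ Finset.Ico m (n - m), X (n - 1 - k) := by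
          rw [Finset.sum_sub_distrib, Finset.sum_const, ← Finset.mul_sum, nsmul_eq_mul]
      _ = (C : ℝ) * yMax - θ * S := by rw [hrev]
  have hlb_pos : ∀ θ : ℝ, 0 ≤ θ → (C : ℝ) * yMin - θ * S ≤ f θ := by
    intro θ hθ
    have hstep : ∑ k ∈ Finset.Ico m (n - m), (yMin - θ * X (n - 1 - k)) ≤ f θ := by
      apply Finset.sum_le_sum
      intro k hk
      simp only [Finset.mem_Ico] at hk
      have hkn : k < n := by omega
      have hjn : n - 1 - k < n := by omega
      rw [hXval _ hjn hjn]
      exact bound_low_pos hx hkn hθ hyMin ⟨n - 1 - k, hjn⟩ rfl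
    calc (C : ℝ) * yMin - θ * S
        = (C : ℝ) * yMin - θ * ∑ k ∈ Finset.Ico m (n - m), X (n - 1 - k) := by rw [hrev]
      _ = ∑ k ∈ Finset.Ico m (n - m), (yMin - θ * X (n - 1 - k)) := by
          rw [Finset.sum_sub_distrib, Finset.sum_const, ← Finset.mul_sum, nsmul_eq_mul]
      _ ≤ f θ := hstep
  have hub_neg : ∀ θ : ℝ, θ ≤ 0 → f θ ≤ (C : ℝ) * yMax - θ * S := by
    intro θ hθ
    have hstep : f θ ≤ ∑ k ∈ Finset.Ico m (n - m), (yMax - θ * X k) := by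
      apply Finset.sum_le_sum
      intro k hk
      simp only [Finset.mem_Ico] at hk
      have hkn : k < n := by omega
      rw [hXval _ hkn hkn]
      exact bound_up_neg hx hkn hθ hyMax ⟨k, hkn⟩ rfl
    calc f θ ≤ _ := hstep
      _ = (C : ℝ) * yMax - θ * S := by
          rw [Finset.sum_sub_distrib, Finset.sum_const, ← Finset.mul_sum, nsmul_eq_mul, hSdef]
  have hlb_neg : ∀ θ : ℝ, θ ≤ 0 → (C : ℝ) * yMin - θ * S ≤ f θ := by
    intro θ hθ
    have hstep : ∑ k ∈ Finset.Ico m (n - m), (yMin - θ * X k) ≤ f θ := by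
      apply Finset.sum_le_sum
      intro k hk
      simp only [Finset.mem_Ico] at hk
      have hkn : k < n := by omega
      rw [hXval _ hkn hkn]
      exact bound_low_neg hx hkn hθ hyMin ⟨k, hkn⟩ rfl
    calc (C : ℝ) * yMin - θ * S
        = ∑ k ∈ Finset.Ico m (n - m), (yMin - θ * X k) := by
          rw [Finset.sum_sub_distrib, Finset.sum_const, ← Finset.mul_sum, nsmul_eq_mul, hSdef]
      _ ≤ f θ := hstep
  -- find a, b with f a ≤ 0 ≤ f b
  have key : ∃ a b : ℝ, f a ≤ 0 ∧ 0 ≤ f b := by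
    rcases lt_or_gt_of_ne hS0 with hSneg | hSpos
    · refine ⟨min 0 ((C : ℝ) * yMax / S), max 0 ((C : ℝ) * yMin / S), ?_, ?_⟩
      · have ha : min 0 ((C : ℝ) * yMax / S) ≤ 0 := min_le_left _ _
        have ha2 : min 0 ((C : ℝ) * yMax / S) ≤ (C : ℝ) * yMax / S := min_le_right _ _
        have h3 : (C : ℝ) * yMax ≤ min 0 ((C : ℝ) * yMax / S) * S := by
          have := mul_le_mul_of_nonpos_right ha2 (le_of_lt hSneg)
          rwa [div_mul_cancel₀ _ hS0] at this
        have := hub_neg _ ha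
        linarith
      · have hb : 0 ≤ max 0 ((C : ℝ) * yMin / S) := le_max_left _ _
        have hb2 : (C : ℝ) * yMin / S ≤ max 0 ((C : ℝ) * yMin / S) := le_max_right _ _
        have h3 : max 0 ((C : ℝ) * yMin / S) * S ≤ (C : ℝ) * yMin := by
          have := mul_le_mul_of_nonpos_right hb2 (le_of_lt hSneg)
          rwa [div_mul_cancel₀ _ hS0] at this
        have := hlb_pos _ hb
        linarith
    · refine ⟨max 0 ((C : ℝ) * yMax / S), min 0 ((C : ℝ) * yMin / S), ?_, ?_⟩
      · have ha : 0 ≤ max 0 ((C : ℝ) * yMax / S) := le_max_left _ _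
        have ha2 : (C : ℝ) * yMax / S ≤ max 0 ((C : ℝ) * yMax / S) := le_max_right _ _
        have h3 : (C : ℝ) * yMax ≤ max 0 ((C : ℝ) * yMax / S) * S := by
          have := mul_le_mul_of_nonneg_right ha2 (le_of_lt hSpos)
          rwa [div_mul_cancel₀ _ hS0] at this
        have := hub_pos _ ha
        linarith
      · have hb : min 0 ((C : ℝ) * yMin / S) ≤ 0 := min_le_left _ _
        have hb2 : min 0 ((C : ℝ) * yMin / S) ≤ (C : ℝ) * yMin / S := min_le_right _ _
        have h3 : min 0 ((C : ℝ) * yMin / S) * S ≤ (C : ℝ) * yMin := by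
          have := mul_le_mul_of_nonneg_right hb2 (le_of_lt hSpos)
          rwa [div_mul_cancel₀ _ hS0] at this
        have := hlb_neg _ hb
        linarith
  obtain ⟨a, b, hfa, hfb⟩ := key
  have hivt := intermediate_value_uIcc (f := f) (a := a) (b := b) hcont.continuousOn
  have h0 : (0 : ℝ) ∈ Set.uIcc (f a) (f b) := Set.mem_uIcc.mpr (Or.inl ⟨hfa, hfb⟩)
  obtain ⟨θ, _, hθ⟩ := hivt h0
  refine ⟨θ, ?_⟩
  have hfθ : ∑ k ∈ Finset.Ico m (n - m), orderStat n x y k θ = 0 := hθ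
  rw [hfθ, mul_zero]
end

section
/- Let f: ℝ → ℝ be defined by f(θ) = Σ_{i=m+1}^{n−m} ε_{(i)}(θ) where ε_{(i)}(θ) are the order statistics of ε_i(θ) = y_i − θ·x_i, with data sorted so x_1 ≤ … ≤ x_n and n − 2m ≥ 1. If all x_i > 0, then f is strictly decreasing in θ; consequently, the trimmed mean equation f(θ) = 0 has at most one root. -/
lemma countP_lt_le {L : List ℝ} (hs : L.Pairwise (· ≤ ·)) {k : ℕ} (hk : k < L.length) :
    L.countP (fun a => decide (a < L[k])) ≤ k := by
  set c := L[k] with hc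
  have hsplit : L.countP (fun a => decide (a < c)) =
      (L.take k).countP (fun a => decide (a < c)) +
      (L.drop k).countP (fun a => decide (a < c)) := by
    conv_lhs => rw [← List.take_append_drop k L]
    rw [List.countP_append]
  have hdrop : (L.drop k).countP (fun a => decide (a < c)) = 0 := by
    rw [List.countP_eq_zero]
    intro a ha
    obtain ⟨j, hj, rfl⟩ := List.mem_iff_getElem.mp ha
    rw [List.getElem_drop]
    simp only [decide_eq_true_eq, not_lt]
    have := hs.rel_get_of_le (a := ⟨k, hk⟩)
      (b := ⟨k + j, by have h := hj; simp [List.length_drop] at h; omega⟩)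
      (by simp)
    simpa using this
  have htake : (L.take k).countP (fun a => decide (a < c)) ≤ k :=
    le_trans List.countP_le_length (List.length_take_le k L)
  omega

lemma le_countP_le {L : List ℝ} (hs : L.Pairwise (· ≤ ·)) {k : ℕ} (hk : k < L.length) :
    k + 1 ≤ L.countP (fun a => decide (a ≤ L[k])) := by
  set c := L[k] with hc
  have hsplit : L.countP (fun a => decide (a ≤ c)) =
      (L.take (k+1)).countP (fun a => decide (a ≤ c)) +
      (L.drop (k+1)).countP (fun a => decide (a ≤ c)) := by
    conv_lhs => rw [← List.take_append_drop (k+1) L]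
    rw [List.countP_append]
  have htake : (L.take (k+1)).countP (fun a => decide (a ≤ c)) = (L.take (k+1)).length := by
    rw [List.countP_eq_length]
    intro a ha
    obtain ⟨j, hj, rfl⟩ := List.mem_iff_getElem.mp ha
    have hjk : j < k + 1 := lt_of_lt_of_le hj (by simpa using List.length_take_le (k+1) L)
    have hjL : j < L.length := lt_of_lt_of_le hj (by simp [List.length_take])
    rw [List.getElem_take]
    simp only [decide_eq_true_eq]
    have := hs.rel_get_of_le (a := ⟨j, hjL⟩) (b := ⟨k, hk⟩) (by simpa using Nat.lt_succ_iff.mp hjk)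
    simpa using this
  have hlen : (L.take (k+1)).length = k + 1 := by
    simp [List.length_take]; omega
  omega

/-- Componentwise `≤` implies `≤` of order statistics. -/
lemma getD_sort_le {n : ℕ} (f g : Fin n → ℝ) (hfg : ∀ i, f i ≤ g i) (k : ℕ) (hk : k < n) :
    (Multiset.sort (Multiset.map f Finset.univ.val) (· ≤ ·)).getD k 0 ≤
      (Multiset.sort (Multiset.map g Finset.univ.val) (· ≤ ·)).getD k 0 := by
  set L := Multiset.sort (Multiset.map f Finset.univ.val) (· ≤ ·) with hL
  set M := Multiset.sort (Multiset.map g Finset.univ.val) (· ≤ ·) with hM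
  have hLlen : L.length = n := by simp [hL]
  have hMlen : M.length = n := by simp [hM]
  have hkL : k < L.length := hLlen ▸ hk
  have hkM : k < M.length := hMlen ▸ hk
  rw [List.getD_eq_getElem _ _ hkL, List.getD_eq_getElem _ _ hkM]
  by_contra hcon
  push_neg at hcon
  set c := L[k] with hc
  set d := M[k] with hd
  -- count of f-values < c is ≤ k
  have h1 : Multiset.countP (fun a => a < c) (Multiset.map f Finset.univ.val) ≤ k := by
    have : Multiset.map f Finset.univ.val = (L : Multiset ℝ) := (Multiset.sort_eq _ _).symm
    rw [this, Multiset.coe_countP]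
    exact countP_lt_le (Multiset.pairwise_sort _ _) hkL
  -- count of g-values ≤ d is ≥ k+1
  have h2 : k + 1 ≤ Multiset.countP (fun a => a ≤ d) (Multiset.map g Finset.univ.val) := by
    have : Multiset.map g Finset.univ.val = (M : Multiset ℝ) := (Multiset.sort_eq _ _).symm
    rw [this, Multiset.coe_countP]
    exact le_countP_le (Multiset.pairwise_sort _ _) hkM
  have h3 : Multiset.countP (fun a => a ≤ d) (Multiset.map g Finset.univ.val) ≤
      Multiset.countP (fun a => a < c) (Multiset.map f Finset.univ.val) := by
    rw [Multiset.countP_map, Multiset.countP_map]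
    apply Multiset.card_le_card
    apply Multiset.monotone_filter_right
    intro i hi
    exact lt_of_le_of_lt (le_trans (hfg i) hi) hcon
  omega

lemma sort_map_sub (s : Multiset ℝ) (c : ℝ) :
    Multiset.sort (s.map (fun a => a - c)) (· ≤ ·) =
      (Multiset.sort s (· ≤ ·)).map (fun a => a - c) := by
  refine (fun hp hs => List.Perm.eq_of_pairwise' (Multiset.pairwise_sort _ _) hs hp) ?_ ?_
  · rw [← Multiset.coe_eq_coe]
    rw [Multiset.sort_eq, ← Multiset.map_coe, Multiset.sort_eq]
  · exact List.Pairwise.map _ (fun a b hab => by simpa using hab) (Multiset.pairwise_sort _ _)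

theorem stmt_12 (n m : ℕ) (x y : Fin n → ℝ) (hx : Monotone x) (hm : 1 ≤ n - 2 * m)
    (hmn : 2 * m ≤ n) (hpos : ∀ i, 0 < x i) :
    StrictAnti (fun θ : ℝ => ∑ k ∈ Finset.Ico m (n - m), orderStat n x y k θ) ∧
      ∀ a b : ℝ, (∑ k ∈ Finset.Ico m (n - m), orderStat n x y k a) = 0 →
        (∑ k ∈ Finset.Ico m (n - m), orderStat n x y k b) = 0 → a = b := by
  have hn : 0 < n := by omega
  have hxmin : ∀ i, x ⟨0, hn⟩ ≤ x i := fun i => hx (by simp [Fin.le_def])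
  have hx0 : 0 < x ⟨0, hn⟩ := hpos _
  have key : ∀ a b : ℝ, a < b → ∀ k, k < n →
      orderStat n x y k b ≤ orderStat n x y k a - (b - a) * x ⟨0, hn⟩ := by
    intro a b hab k hk
    set c := (b - a) * x ⟨0, hn⟩ with hc
    -- orderStat at b ≤ orderStat of shifted residuals (y - c) at a
    have step1 : orderStat n x y k b ≤ orderStat n x (fun i => y i - c) k a := by
      unfold orderStat sortedResiduals
      apply getD_sort_le _ _ _ k hk
      intro i
      have : (b - a) * x ⟨0, hn⟩ ≤ (b - a) * x i :=
        mul_le_mul_of_nonneg_left (hxmin i) (by linarith)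
      simp only
      nlinarith [this]
    have step2 : orderStat n x (fun i => y i - c) k a = orderStat n x y k a - c := by
      unfold orderStat sortedResiduals
      have hmap : (Multiset.map (fun i => (y i - c) - a * x i) Finset.univ.val) =
          (Multiset.map (fun i => y i - a * x i) Finset.univ.val).map (fun r => r - c) := by
        rw [Multiset.map_map]
        congr 1
        funext i
        simp
        ring
      rw [hmap, sort_map_sub]
      set L := Multiset.sort (Multiset.map (fun i => y i - a * x i) Finset.univ.val) (· ≤ ·)
        with hL
      have hkL : k < L.length := by simp [hL]; exact hk
      rw [List.getD_eq_getElem _ _ (by simpa using hkL), List.getD_eq_getElem _ _ hkL,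
        List.getElem_map]
    rw [step2] at step1
    exact step1
  have hne : (Finset.Ico m (n - m)).Nonempty := by
    rw [Finset.nonempty_Ico]; omega
  have hSA : StrictAnti (fun θ : ℝ => ∑ k ∈ Finset.Ico m (n - m), orderStat n x y k θ) := by
    intro a b hab
    apply Finset.sum_lt_sum_of_nonempty hne
    intro k hk
    have hkn : k < n := by
      have := (Finset.mem_Ico.mp hk).2; omega
    have := key a b hab k hkn
    nlinarith [mul_pos (sub_pos.mpr hab) hx0]
  exact ⟨hSA, fun a b ha hb => hSA.injective (by rw [ha, hb])⟩
end
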